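/- Separating linear forms via shuffles: let x_1, ..., x_n be elements of the range of the signature map (group-like elements of T((ℝ^d))) that are pairwise distinct. Then for each i there exists a linear form σ_i on T((ℝ^d)), given explicitly as a shuffle-polynomial in coordinate projections, such that σ_i(x_j) = δ_{ij} for all j = 1,...,n. -/

import Mathlib

open MeasureTheory Set
open scoped ENNReal NNReal

/-- Iterated integral of a path against its derivative; the head letter is integrated
outermost (so this corresponds to the reversed word). -/
noncomputable def iterInt {d : ℕ} (X : ℝ → Fin d → ℝ) (a : ℝ) : List (Fin d) → ℝ → ℝ
  | [], _ => 1
  | i :: I, b => ∫ u in a..b, iterInt X a I u * deriv (fun s => X s i) u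

/-- Coordinate iterated integral `π^I(S(X))` over `[a,b]` for the word `I = (i₁,…,iₙ)`
(innermost integration first). -/
noncomputable def sigCoord {d : ℕ} (X : ℝ → Fin d → ℝ) (a b : ℝ) (I : List (Fin d)) : ℝ :=
  iterInt X a I.reverse b

/-- The signature of a path over `[a,b]`, as the family of its coordinate iterated
integrals indexed by words; this represents an element of the tensor algebra `T((ℝ^d))`. -/
noncomputable def Sig {d : ℕ} (X : ℝ → Fin d → ℝ) (a b : ℝ) : List (Fin d) → ℝ :=
  fun I => sigCoord X a b I

/-- The product of the tensor algebra `T((ℝ^d))` in coordinates. -/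
noncomputable def tmul {d : ℕ} (x y : List (Fin d) → ℝ) : List (Fin d) → ℝ :=
  fun w => ∑ k ∈ Finset.range (w.length + 1), x (w.take k) * y (w.drop k)

/-- The unit of the tensor algebra. -/
def tunit {d : ℕ} : List (Fin d) → ℝ := fun w => if w = [] then 1 else 0

/-- The tensor exponential `exp(v) = Σ v^{⊗n}/n!` in coordinates. -/
noncomputable def texp {d : ℕ} (v : Fin d → ℝ) : List (Fin d) → ℝ :=
  fun w => (w.map v).prod / w.length.factorial

/-- The multiset of shuffles of two words. -/
def shuffles {α : Type*} : List α → List α → Multiset (List α)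
  | [], v => {v}
  | u, [] => {u}
  | a :: u, b :: v => ((shuffles u (b :: v)).map (a :: ·)) + ((shuffles (a :: u) v).map (b :: ·))
  termination_by u v => u.length + v.length

/-- `x` is in the range of the signature map on continuous bounded-variation paths. -/
def IsSignature {d : ℕ} (x : List (Fin d) → ℝ) : Prop :=
  ∃ (X : ℝ → Fin d → ℝ) (a b : ℝ), a ≤ b ∧ ContinuousOn X (Set.Icc a b) ∧
    BoundedVariationOn X (Set.Icc a b) ∧ x = Sig X a b

/-- Evaluation of a (finitely supported) linear form on `T((ℝ^d))`. -/
noncomputable def formEval {d : ℕ} (f : List (Fin d) →₀ ℝ) (x : List (Fin d) → ℝ) : ℝ :=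
  f.sum fun w c => c * x w

/-- The shuffle product of two linear forms, extended bilinearly from words. -/
noncomputable def shuffleForm {d : ℕ} (f g : List (Fin d) →₀ ℝ) : List (Fin d) →₀ ℝ :=
  f.sum fun u cu => g.sum fun v cv =>
    (cu * cv) • ((shuffles u v).map fun w => Finsupp.single w (1 : ℝ)).sum

lemma shuffles_nil_left {α : Type*} (v : List α) : shuffles [] v = {v} := by
  cases v <;> rw [shuffles] <;> simp

lemma shuffles_nil_right {α : Type*} (u : List α) : shuffles u [] = {u} := by
  cases u <;> rw [shuffles] <;> simp

lemma shuffles_cons_cons {α : Type*} (a b : α) (u v : List α) :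
    shuffles (a :: u) (b :: v)
      = ((shuffles u (b :: v)).map (a :: ·)) + ((shuffles (a :: u) v).map (b :: ·)) := by
  rw [shuffles]

lemma iterInt_nil {d : ℕ} (X : ℝ → Fin d → ℝ) (a t : ℝ) : iterInt X a [] t = 1 := rfl

lemma iterInt_cons {d : ℕ} (X : ℝ → Fin d → ℝ) (a : ℝ) (i : Fin d) (I : List (Fin d)) (t : ℝ) :
    iterInt X a (i :: I) t = ∫ s in a..t, iterInt X a I s * deriv (fun u => X u i) s := rfl

lemma monotone_integrableOn_deriv {g : ℝ → ℝ} (hg : Monotone g) (a b : ℝ) :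
    IntegrableOn (deriv g) (Ioc a b) := by
  set μ := hg.stieltjesFunction.measure with hμ
  have hae : ∀ᵐ x, deriv g x = (μ.rnDeriv volume x).toReal :=
    hg.ae_hasDerivAt.mono fun x hx => hx.deriv
  have hmeas : Measurable fun x => (μ.rnDeriv volume x).toReal :=
    (Measure.measurable_rnDeriv μ volume).ennreal_toReal
  have hint : IntegrableOn (fun x => (μ.rnDeriv volume x).toReal) (Ioc a b) := by
    refine ⟨hmeas.aestronglyMeasurable, ?_⟩
    have hb : ∀ x : ℝ, (‖(μ.rnDeriv volume x).toReal‖₊ : ENNReal) ≤ μ.rnDeriv volume x := by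
      intro x
      rw [← enorm_eq_nnnorm, ← ofReal_norm, Real.norm_of_nonneg ENNReal.toReal_nonneg]
      exact ENNReal.ofReal_toReal_le
    calc ∫⁻ x in Ioc a b, ‖(μ.rnDeriv volume x).toReal‖₊ ∂volume
        ≤ ∫⁻ x in Ioc a b, μ.rnDeriv volume x ∂volume := lintegral_mono fun x => hb x
      _ ≤ μ (Ioc a b) := Measure.setLIntegral_rnDeriv_le _
      _ = ENNReal.ofReal (hg.stieltjesFunction b - hg.stieltjesFunction a) := by
          rw [hμ, StieltjesFunction.measure_Ioc]
      _ < ⊤ := ENNReal.ofReal_lt_top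
  exact hint.congr (ae_restrict_of_ae (hae.mono fun x hx => hx.symm))

lemma bv_integrableOn_deriv {g : ℝ → ℝ} {a b : ℝ} (hg : BoundedVariationOn g (Icc a b)) :
    IntegrableOn (deriv g) (Ioc a b) := by
  rcases le_or_gt b a with h | hab
  · rw [Ioc_eq_empty h.not_gt]; exact integrableOn_empty
  obtain ⟨p, q, hp, hq, hpq⟩ := hg.locallyBoundedVariationOn.exists_monotoneOn_sub_monotoneOn
  set P : ℝ → ℝ := fun t => p (projIcc a b hab.le t) with hPdef
  set Q : ℝ → ℝ := fun t => q (projIcc a b hab.le t) with hQdef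
  have hP : Monotone P := fun s t hst =>
    hp (projIcc a b hab.le s).2 (projIcc a b hab.le t).2
      (Subtype.coe_le_coe.2 (monotone_projIcc hab.le hst))
  have hQ : Monotone Q := fun s t hst =>
    hq (projIcc a b hab.le s).2 (projIcc a b hab.le t).2
      (Subtype.coe_le_coe.2 (monotone_projIcc hab.le hst))
  have hPQ : ∀ t ∈ Ioo a b, g t = P t - Q t := by
    intro t ht
    have hmem : t ∈ Icc a b := Ioo_subset_Icc_self ht
    have : projIcc a b hab.le t = ⟨t, hmem⟩ := projIcc_of_mem hab.le hmem
    simp only [hPdef, hQdef, this]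
    rw [hpq]; rfl
  have hder : ∀ᵐ x ∂(volume.restrict (Ioc a b)), deriv g x = deriv P x - deriv Q x := by
    have hb : ∀ᵐ x ∂(volume : Measure ℝ), x ≠ b := by
      rw [ae_iff]
      simp only [not_ne_iff, setOf_eq_eq_singleton]
      exact measure_singleton b
    filter_upwards [ae_restrict_mem measurableSet_Ioc, ae_restrict_of_ae hb,
      ae_restrict_of_ae hP.ae_differentiableAt, ae_restrict_of_ae hQ.ae_differentiableAt]
      with x hx hxb hPx hQx
    have hxo : x ∈ Ioo a b := ⟨hx.1, lt_of_le_of_ne hx.2 hxb⟩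
    have hev : g =ᶠ[nhds x] fun t => P t - Q t :=
      Filter.eventually_of_mem (isOpen_Ioo.mem_nhds hxo) fun t ht => hPQ t ht
    rw [hev.deriv_eq, deriv_fun_sub hPx hQx]
  have hint : IntegrableOn (fun x => deriv P x - deriv Q x) (Ioc a b) :=
    (monotone_integrableOn_deriv hP a b).sub (monotone_integrableOn_deriv hQ a b)
  exact hint.congr (hder.mono fun x hx => hx.symm)

lemma coord_integrableOn_deriv {d : ℕ} {X : ℝ → Fin d → ℝ} {a b : ℝ}
    (hX : BoundedVariationOn X (Icc a b)) (i : Fin d) :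
    IntegrableOn (deriv fun s => X s i) (Ioc a b) := by
  have hl : LipschitzWith 1 (fun v : Fin d → ℝ => v i) := LipschitzWith.eval i
  exact bv_integrableOn_deriv (hl.comp_boundedVariationOn hX)

lemma iterInt_cont_int {d : ℕ} (X : ℝ → Fin d → ℝ) {a b : ℝ}
    (hf : ∀ i, IntegrableOn (deriv fun s => X s i) (Ioc a b)) (I : List (Fin d)) :
    ContinuousOn (iterInt X a I) (Icc a b) ∧
      ∀ i, IntegrableOn (fun s => iterInt X a I s * deriv (fun u => X u i) s) (Ioc a b) := by
  induction I with
  | nil =>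
    refine ⟨continuousOn_const, fun i => ?_⟩
    simp only [iterInt_nil, one_mul]
    exact hf i
  | cons j I ih =>
    have hint := ih.2 j
    have hc : ContinuousOn (iterInt X a (j :: I)) (Icc a b) := by
      have h1 : ContinuousOn
          (fun t => ∫ s in Ioc a t, iterInt X a I s * deriv (fun u => X u j) s) (Icc a b) :=
        intervalIntegral.continuousOn_primitive ((integrableOn_Icc_iff_integrableOn_Ioc (ha := enorm_ne_top)).mpr hint)
      refine h1.congr fun t ht => ?_
      rw [iterInt_cons, intervalIntegral.integral_of_le ht.1]
    refine ⟨hc, fun i => ?_⟩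
    obtain ⟨C, hC⟩ := isCompact_Icc.exists_bound_of_continuousOn hc
    refine Integrable.bdd_mul (c := C) (hf i)
      ((hc.mono Ioc_subset_Icc_self).aestronglyMeasurable measurableSet_Ioc) ?_
    filter_upwards [ae_restrict_mem measurableSet_Ioc] with s hs
    exact hC s (Ioc_subset_Icc_self hs)

lemma prod_integral_split {f g : ℝ → ℝ} {a b : ℝ}
    (hf : IntegrableOn f (Ioc a b)) (hg : IntegrableOn g (Ioc a b)) :
    (∫ s in Ioc a b, f s) * (∫ t in Ioc a b, g t)
      = (∫ t in Ioc a b, (∫ s in Ioc a t, f s) * g t)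
        + (∫ t in Ioc a b, (∫ s in Ioc a t, g s) * f t) := by
  set μ := volume.restrict (Ioc a b) with hμdef
  have hfg : Integrable (fun p : ℝ × ℝ => f p.1 * g p.2) (μ.prod μ) := Integrable.mul_prod hf hg
  have hS1 : MeasurableSet {p : ℝ × ℝ | p.1 ≤ p.2} := measurableSet_le measurable_fst measurable_snd
  have hS2 : MeasurableSet {p : ℝ × ℝ | p.2 < p.1} := measurableSet_lt measurable_snd measurable_fst
  have h1 : Integrable ({p : ℝ × ℝ | p.1 ≤ p.2}.indicator fun p => f p.1 * g p.2) (μ.prod μ) :=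
    hfg.indicator hS1
  have h2 : Integrable ({p : ℝ × ℝ | p.2 < p.1}.indicator fun p => f p.1 * g p.2) (μ.prod μ) :=
    hfg.indicator hS2
  have hsplit : (fun p : ℝ × ℝ => f p.1 * g p.2)
      = fun p => ({p : ℝ × ℝ | p.1 ≤ p.2}.indicator fun p => f p.1 * g p.2) p
          + ({p : ℝ × ℝ | p.2 < p.1}.indicator fun p => f p.1 * g p.2) p := by
    funext p
    rcases le_or_gt p.1 p.2 with h | h
    · simp [Set.indicator_apply, h, h.not_gt]
    · simp [Set.indicator_apply, h, h.not_ge]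
  have e1 : ∫ p : ℝ × ℝ, ({p : ℝ × ℝ | p.1 ≤ p.2}.indicator fun p => f p.1 * g p.2) p ∂(μ.prod μ)
      = ∫ t in Ioc a b, (∫ s in Ioc a t, f s) * g t := by
    rw [MeasureTheory.integral_prod_symm _ h1]
    refine setIntegral_congr_fun measurableSet_Ioc fun t ht => ?_
    have hind : (fun s => ({p : ℝ × ℝ | p.1 ≤ p.2}.indicator (fun p => f p.1 * g p.2)) (s, t))
        = (Iic t).indicator fun s => f s * g t := by
      funext s
      by_cases h : s ≤ t <;> simp [Set.indicator_apply, h]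
    rw [hind, integral_indicator measurableSet_Iic,
      Measure.restrict_restrict measurableSet_Iic]
    have hset : Iic t ∩ Ioc a b = Ioc a t := by
      ext s
      simp only [mem_inter_iff, mem_Iic, mem_Ioc]
      exact ⟨fun ⟨h1, h2, h3⟩ => ⟨h2, h1⟩, fun ⟨h1, h2⟩ => ⟨h2, h1, h2.trans ht.2⟩⟩
    rw [hset, MeasureTheory.integral_mul_const]
  have e2 : ∫ p : ℝ × ℝ, ({p : ℝ × ℝ | p.2 < p.1}.indicator fun p => f p.1 * g p.2) p ∂(μ.prod μ)
      = ∫ t in Ioc a b, (∫ s in Ioc a t, g s) * f t := by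
    rw [MeasureTheory.integral_prod _ h2]
    refine setIntegral_congr_fun measurableSet_Ioc fun s hs => ?_
    have hind : (fun t => ({p : ℝ × ℝ | p.2 < p.1}.indicator (fun p => f p.1 * g p.2)) (s, t))
        = (Iio s).indicator fun t => f s * g t := by
      funext t
      by_cases h : t < s <;> simp [Set.indicator_apply, h]
    rw [hind, integral_indicator measurableSet_Iio,
      Measure.restrict_restrict measurableSet_Iio]
    have hset : Iio s ∩ Ioc a b = Ioo a s := by
      ext t
      simp only [mem_inter_iff, mem_Iio, mem_Ioc, mem_Ioo]
      exact ⟨fun ⟨h1, h2, h3⟩ => ⟨h2, h1⟩, fun ⟨h1, h2⟩ => ⟨h2, h1, h2.le.trans hs.2⟩⟩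
    rw [hset, MeasureTheory.integral_const_mul, ← integral_Ioc_eq_integral_Ioo, mul_comm]
  calc (∫ s in Ioc a b, f s) * (∫ t in Ioc a b, g t)
      = ∫ p : ℝ × ℝ, f p.1 * g p.2 ∂(μ.prod μ) := (integral_prod_mul f g).symm
    _ = _ := by rw [hsplit, integral_add h1 h2, e1, e2]

lemma multiset_integrable_sum {β : Type*} {μ : Measure ℝ} (m : Multiset β) (F : β → ℝ → ℝ)
    (h : ∀ w ∈ m, Integrable (F w) μ) :
    Integrable (fun x => (m.map fun w => F w x).sum) μ := by
  induction m using Multiset.induction_on with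
  | empty => simpa using integrable_const (0 : ℝ)
  | cons c s ih =>
    simp only [Multiset.map_cons, Multiset.sum_cons]
    exact (h c (Multiset.mem_cons_self _ _)).add (ih fun w hw => h w (Multiset.mem_cons_of_mem hw))

lemma multiset_integral_sum {β : Type*} {μ : Measure ℝ} (m : Multiset β) (F : β → ℝ → ℝ)
    (h : ∀ w ∈ m, Integrable (F w) μ) :
    ∫ x, (m.map fun w => F w x).sum ∂μ = (m.map fun w => ∫ x, F w x ∂μ).sum := by
  induction m using Multiset.induction_on with
  | empty => simp
  | cons c s ih =>
    simp only [Multiset.map_cons, Multiset.sum_cons]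
    rw [integral_add (h c (Multiset.mem_cons_self _ _))
      (multiset_integrable_sum _ _ fun w hw => h w (Multiset.mem_cons_of_mem hw)),
      ih fun w hw => h w (Multiset.mem_cons_of_mem hw)]

lemma iterInt_shuffle {d : ℕ} (X : ℝ → Fin d → ℝ) {a b : ℝ}
    (hf : ∀ i, IntegrableOn (deriv fun s => X s i) (Ioc a b)) :
    ∀ (u v : List (Fin d)) (t : ℝ), t ∈ Icc a b →
      iterInt X a u t * iterInt X a v t = ((shuffles u v).map fun w => iterInt X a w t).sum := by
  suffices key : ∀ (n : ℕ) (u v : List (Fin d)), u.length + v.length ≤ n → ∀ t ∈ Icc a b,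
      iterInt X a u t * iterInt X a v t = ((shuffles u v).map fun w => iterInt X a w t).sum by
    intro u v t ht; exact key (u.length + v.length) u v le_rfl t ht
  intro n
  induction n with
  | zero =>
    intro u v hlen t ht
    have hu : u.length = 0 := by omega
    have hv : v.length = 0 := by omega
    obtain rfl := List.length_eq_zero_iff.mp hu
    obtain rfl := List.length_eq_zero_iff.mp hv
    simp [shuffles_nil_left, iterInt_nil]
  | succ n IH =>
    intro u v hlen t ht
    match u, v with
    | [], v => simp [shuffles_nil_left, iterInt_nil]
    | (i :: u), [] => simp [shuffles_nil_right, iterInt_nil]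
    | (i :: u), (j :: v) =>
      have hat : a ≤ t := ht.1
      have hsub : Ioc a t ⊆ Ioc a b := Ioc_subset_Ioc_right ht.2
      have hIu : IntegrableOn (fun s => iterInt X a u s * deriv (fun r => X r i) s) (Ioc a t) :=
        ((iterInt_cont_int X hf u).2 i).mono_set hsub
      have hIv : IntegrableOn (fun s => iterInt X a v s * deriv (fun r => X r j) s) (Ioc a t) :=
        ((iterInt_cont_int X hf v).2 j).mono_set hsub
      have hmemIcc : ∀ s ∈ Ioc a t, s ∈ Icc a b := fun s hs => ⟨hs.1.le, hs.2.trans ht.2⟩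
      have hW : ∀ (w : List (Fin d)) (k : Fin d),
          IntegrableOn (fun s => iterInt X a w s * deriv (fun r => X r k) s) (Ioc a t) :=
        fun w k => ((iterInt_cont_int X hf w).2 k).mono_set hsub
      have e1 : ∀ (w : List (Fin d)) (k : Fin d) (s : ℝ), a ≤ s →
          (∫ r in Ioc a s, iterInt X a w r * deriv (fun z => X z k) r)
            = iterInt X a (k :: w) s := by
        intro w k s hs
        rw [iterInt_cons, intervalIntegral.integral_of_le hs]
      have len1 : (i :: u).length + v.length ≤ n := by
        simp only [List.length_cons] at hlen ⊢; omega
      have len2 : u.length + (j :: v).length ≤ n := by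
        simp only [List.length_cons] at hlen ⊢; omega
      have step1 : iterInt X a (i :: u) t * iterInt X a (j :: v) t
          = (∫ s in Ioc a t,
              (∫ r in Ioc a s, iterInt X a u r * deriv (fun z => X z i) r)
                * (iterInt X a v s * deriv (fun z => X z j) s))
            + (∫ s in Ioc a t,
              (∫ r in Ioc a s, iterInt X a v r * deriv (fun z => X z j) r)
                * (iterInt X a u s * deriv (fun z => X z i) s)) := by
        rw [iterInt_cons, iterInt_cons, intervalIntegral.integral_of_le hat,
          intervalIntegral.integral_of_le hat]
        exact prod_integral_split hIu hIv
      have first : (∫ s in Ioc a t,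
              (∫ r in Ioc a s, iterInt X a u r * deriv (fun z => X z i) r)
                * (iterInt X a v s * deriv (fun z => X z j) s))
          = (((shuffles (i :: u) v).map (j :: ·)).map fun w => iterInt X a w t).sum := by
        have congr1 : EqOn
            (fun s => (∫ r in Ioc a s, iterInt X a u r * deriv (fun z => X z i) r)
                * (iterInt X a v s * deriv (fun z => X z j) s))
            (fun s => ((shuffles (i :: u) v).map
                fun w => iterInt X a w s * deriv (fun z => X z j) s).sum)
            (Ioc a t) := by
          intro s hs
          simp only
          rw [e1 u i s hs.1.le]
          calc iterInt X a (i :: u) s * (iterInt X a v s * deriv (fun z => X z j) s)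
              = (iterInt X a (i :: u) s * iterInt X a v s) * deriv (fun z => X z j) s := by ring
            _ = ((shuffles (i :: u) v).map fun w => iterInt X a w s).sum
                  * deriv (fun z => X z j) s := by
                rw [IH (i :: u) v len1 s (hmemIcc s hs)]
            _ = _ := (Multiset.sum_map_mul_right).symm
        rw [setIntegral_congr_fun measurableSet_Ioc congr1,
          multiset_integral_sum _ _ (fun w _ => hW w j), Multiset.map_map]
        refine congrArg Multiset.sum (Multiset.map_congr rfl fun w _ => ?_)
        simpa using e1 w j t hat
      have second : (∫ s in Ioc a t,
              (∫ r in Ioc a s, iterInt X a v r * deriv (fun z => X z j) r)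
                * (iterInt X a u s * deriv (fun z => X z i) s))
          = (((shuffles u (j :: v)).map (i :: ·)).map fun w => iterInt X a w t).sum := by
        have congr2 : EqOn
            (fun s => (∫ r in Ioc a s, iterInt X a v r * deriv (fun z => X z j) r)
                * (iterInt X a u s * deriv (fun z => X z i) s))
            (fun s => ((shuffles u (j :: v)).map
                fun w => iterInt X a w s * deriv (fun z => X z i) s).sum)
            (Ioc a t) := by
          intro s hs
          simp only
          rw [e1 v j s hs.1.le]
          calc iterInt X a (j :: v) s * (iterInt X a u s * deriv (fun z => X z i) s)
              = (iterInt X a u s * iterInt X a (j :: v) s) * deriv (fun z => X z i) s := by ring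
            _ = ((shuffles u (j :: v)).map fun w => iterInt X a w s).sum
                  * deriv (fun z => X z i) s := by
                rw [IH u (j :: v) len2 s (hmemIcc s hs)]
            _ = _ := (Multiset.sum_map_mul_right).symm
        rw [setIntegral_congr_fun measurableSet_Ioc congr2,
          multiset_integral_sum _ _ (fun w _ => hW w i), Multiset.map_map]
        refine congrArg Multiset.sum (Multiset.map_congr rfl fun w _ => ?_)
        simpa using e1 w i t hat
      rw [step1, first, second, shuffles_cons_cons, Multiset.map_add, Multiset.sum_add]
      exact add_comm _ _

/-- Being a character of the shuffle algebra, in the coordinates used here. -/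
def IsChar {d : ℕ} (x : List (Fin d) → ℝ) : Prop :=
  x [] = 1 ∧ ∀ u v, x u * x v = (((shuffles u.reverse v.reverse).map List.reverse).map x).sum

lemma isChar_of_isSignature {d : ℕ} {x : List (Fin d) → ℝ} (h : IsSignature x) : IsChar x := by
  obtain ⟨X, a, b, hab, hcont, hBV, rfl⟩ := h
  have hf : ∀ i, IntegrableOn (deriv fun s => X s i) (Ioc a b) :=
    fun i => coord_integrableOn_deriv hBV i
  constructor
  · rfl
  · intro u v
    have hb : b ∈ Icc a b := ⟨hab, le_refl b⟩
    have hmain := iterInt_shuffle X hf u.reverse v.reverse b hb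
    calc Sig X a b u * Sig X a b v
        = iterInt X a u.reverse b * iterInt X a v.reverse b := rfl
      _ = ((shuffles u.reverse v.reverse).map fun w => iterInt X a w b).sum := hmain
      _ = _ := by
          rw [Multiset.map_map]
          refine congrArg Multiset.sum (Multiset.map_congr rfl fun w _ => ?_)
          simp [Function.comp, Sig, sigCoord, List.reverse_reverse]

lemma multiset_sum_swap {β : Type*} {m : ℕ} (S : Multiset β) (F : Fin m → β → ℝ) :
    ∑ j, (S.map (F j)).sum = (S.map fun w => ∑ j, F j w).sum := by
  induction S using Multiset.induction_on with
  | empty => simp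
  | cons c s ih =>
    simp [Multiset.map_cons, Multiset.sum_cons, Finset.sum_add_distrib, ih]

lemma chars_indep {d : ℕ} : ∀ (m : ℕ) (y : Fin m → (List (Fin d) → ℝ)),
    (∀ j, IsChar (y j)) → (∀ i j, i ≠ j → y i ≠ y j) →
    ∀ c : Fin m → ℝ, (∑ j, c j • y j) = 0 → ∀ j, c j = 0 := by
  intro m
  induction m with
  | zero => intro y _ _ c _ j; exact Fin.elim0 j
  | succ m IH =>
    intro y hchar hdist c hsum j0
    have hw : ∀ w, ∑ j, c j * y j w = 0 := by
      intro w
      have := congrFun hsum w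
      simpa [Finset.sum_apply, Pi.smul_apply, smul_eq_mul] using this
    have hA : ∀ u w', ∑ j, c j * y j u * y j w' = 0 := by
      intro u w'
      calc ∑ j, c j * y j u * y j w'
          = ∑ j, (((shuffles u.reverse w'.reverse).map List.reverse).map
              fun w => c j * y j w).sum := by
            refine Finset.sum_congr rfl fun j _ => ?_
            rw [mul_assoc, (hchar j).2 u w', Multiset.sum_map_mul_left]
        _ = (((shuffles u.reverse w'.reverse).map List.reverse).map
              fun w => ∑ j, c j * y j w).sum := multiset_sum_swap _ _
        _ = 0 := by
            refine Multiset.sum_eq_zero fun z hz => ?_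
            obtain ⟨w, _, rfl⟩ := Multiset.mem_map.mp hz
            exact hw w
    have hC : ∀ u : List (Fin d),
        ∑ j : Fin m, (c j.castSucc * (y j.castSucc u - y (Fin.last m) u)) • y j.castSucc
          = (0 : List (Fin d) → ℝ) := by
      intro u
      have h1 : ∑ j : Fin (m + 1), (c j * (y j u - y (Fin.last m) u)) • y j = 0 := by
        funext w'
        simp only [Finset.sum_apply, Pi.smul_apply, smul_eq_mul, Pi.zero_apply]
        calc ∑ j, c j * (y j u - y (Fin.last m) u) * y j w'
            = ∑ j, (c j * y j u * y j w' - y (Fin.last m) u * (c j * y j w')) :=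
              Finset.sum_congr rfl fun j _ => by ring
          _ = (∑ j, c j * y j u * y j w')
                - y (Fin.last m) u * ∑ j, c j * y j w' := by
              rw [Finset.sum_sub_distrib, Finset.mul_sum]
          _ = 0 := by rw [hA u w', hw w']; ring
      rw [Fin.sum_univ_castSucc] at h1
      have hlast : (c (Fin.last m) * (y (Fin.last m) u - y (Fin.last m) u)) • y (Fin.last m)
          = (0 : List (Fin d) → ℝ) := by
        simp
      rw [hlast, add_zero] at h1
      exact h1
    have hc0 : ∀ j : Fin m, c j.castSucc = 0 := by
      intro j
      have hjl : y j.castSucc ≠ y (Fin.last m) := by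
        refine hdist _ _ ?_
        simp only [ne_eq, Fin.ext_iff, Fin.coe_castSucc, Fin.val_last]
        omega
      obtain ⟨u, hu⟩ : ∃ u, y j.castSucc u ≠ y (Fin.last m) u := by
        by_contra hcon; push_neg at hcon; exact hjl (funext hcon)
      have hres := IH (fun j => y j.castSucc) (fun j => hchar _)
        (fun i j hij => hdist _ _ ((Fin.castSucc_injective m).ne hij))
        (fun j => c j.castSucc * (y j.castSucc u - y (Fin.last m) u)) (hC u) j
      rcases mul_eq_zero.mp hres with h | h
      · exact h
      · exact absurd (sub_eq_zero.mp h) hu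
    have hlast : c (Fin.last m) = 0 := by
      have h0 := hw []
      rw [Fin.sum_univ_castSucc] at h0
      have h1 : ∑ j : Fin m, c j.castSucc * y j.castSucc [] = 0 :=
        Finset.sum_eq_zero fun j _ => by rw [hc0 j]; ring
      rw [h1, zero_add, (hchar (Fin.last m)).1, mul_one] at h0
      exact h0
    induction j0 using Fin.lastCases with
    | last => exact hlast
    | cast j => exact hc0 j


/-- pairwise distinct signatures can be separated by linear forms on the
tensor algebra. -/
theorem separating_forms {d n : ℕ} (x : Fin n → (List (Fin d) → ℝ))
    (hsig : ∀ i, IsSignature (x i)) (hdist : ∀ i j, i ≠ j → x i ≠ x j) :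
    ∀ i, ∃ L : (List (Fin d) → ℝ) →ₗ[ℝ] ℝ, ∀ j, L (x j) = if i = j then 1 else 0 := by
  intro i
  have hchar : ∀ j, IsChar (x j) := fun j => isChar_of_isSignature (hsig j)
  have hli : LinearIndependent ℝ x := by
    rw [Fintype.linearIndependent_iff]
    intro c hc
    exact chars_indep n x hchar hdist c hc
  set S := Submodule.span ℝ (Set.range x) with hS
  obtain ⟨q, hq⟩ := Submodule.exists_isCompl S
  let bs : Module.Basis (Fin n) ℝ S := Module.Basis.span hli
  let L : (List (Fin d) → ℝ) →ₗ[ℝ] ℝ := (bs.coord i).comp (Submodule.linearProjOfIsCompl S q hq)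
  refine ⟨L, fun j => ?_⟩
  have hmem : x j ∈ S := Submodule.subset_span (Set.mem_range_self j)
  have hproj : Submodule.linearProjOfIsCompl S q hq (x j) = ⟨x j, hmem⟩ :=
    Submodule.linearProjOfIsCompl_apply_left hq ⟨x j, hmem⟩
  have hbs : (⟨x j, hmem⟩ : S) = bs j := (Module.Basis.span_apply hli j).symm
  simp only [L, LinearMap.comp_apply, hproj, hbs, Module.Basis.coord_apply, Module.Basis.repr_self]
  rw [Finsupp.single_apply]
  simp [eq_comm]
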